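/- arXiv:2304.07529 — 2 statements merged into one kernel-verified Lean document; each statement's English description precedes it below -/
import Mathlib

section
/- Let p be a prime, e > 2, and M any duality on (F_{p^e}, +). Then there exists a nontrivial additive code C of length 1 over F_{p^e} (i.e., {0} ≠ C ≠ F_{p^e}) with C ∩ C^M = {0}. -/
/-- A duality `M` on a finite abelian group `G`: an isomorphism `x ↦ χ_x`
from `G` onto its character group `Hom(G, ℂ*)`. -/
structure Duality (G : Type*) [AddCommGroup G] where
  χ : G → G → ℂˣ
  add_left : ∀ x y z : G, χ (x + y) z = χ x z * χ y z
  add_right : ∀ x y z : G, χ x (y + z) = χ x y * χ x z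
  bij : ∀ ψ : G → ℂˣ, (∀ y z : G, ψ (y + z) = ψ y * ψ z) → ∃! x : G, χ x = ψ

namespace Duality

variable {G : Type*} [AddCommGroup G]

lemma zero_left (M : Duality G) (z : G) : M.χ 0 z = 1 := by
  have h := M.add_left 0 0 z
  rw [add_zero] at h
  exact left_eq_mul.mp h

lemma zero_right (M : Duality G) (z : G) : M.χ z 0 = 1 := by
  have h := M.add_right z 0 0
  rw [add_zero] at h
  exact left_eq_mul.mp h

lemma neg_left (M : Duality G) (x z : G) : M.χ (-x) z = (M.χ x z)⁻¹ := by
  have h := M.add_left x (-x) z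
  rw [add_neg_cancel, M.zero_left] at h
  exact (inv_eq_of_mul_eq_one_right h.symm).symm

lemma neg_right (M : Duality G) (x z : G) : M.χ z (-x) = (M.χ z x)⁻¹ := by
  have h := M.add_right z x (-x)
  rw [add_neg_cancel, M.zero_right] at h
  exact (inv_eq_of_mul_eq_one_right h.symm).symm

/-- The `M`-dual of an additive code `C ≤ G^n`:
`C^M = {x : ∏ i, χ_{x i}(c i) = 1 for all c ∈ C}`. -/
def dualCode {n : ℕ} (M : Duality G) (C : AddSubgroup (Fin n → G)) :
    AddSubgroup (Fin n → G) where
  carrier := {x | ∀ c ∈ C, ∏ i, M.χ (x i) (c i) = 1}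
  zero_mem' := by
    intro c _
    simp [Duality.zero_left]
  add_mem' := by
    intro a b ha hb c hc
    have h : ∏ i, M.χ ((a + b) i) (c i)
        = (∏ i, M.χ (a i) (c i)) * ∏ i, M.χ (b i) (c i) := by
      rw [← Finset.prod_mul_distrib]
      exact Finset.prod_congr rfl fun i _ => M.add_left (a i) (b i) (c i)
    rw [h, ha c hc, hb c hc, mul_one]
  neg_mem' := by
    intro a ha c hc
    have h : ∏ i, M.χ ((-a) i) (c i) = (∏ i, M.χ (a i) (c i))⁻¹ := by
      rw [← Finset.prod_inv_distrib]
      exact Finset.prod_congr rfl fun i _ => M.neg_left (a i) (c i)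
    rw [h, ha c hc, inv_one]

/-- The `Mᵀ`-dual of an additive code `C ≤ G^n`, for the transpose duality
`χ'_x(y) = χ_y(x)`: `C^{Mᵀ} = {x : ∏ i, χ_{c i}(x i) = 1 for all c ∈ C}`. -/
def dualTCode {n : ℕ} (M : Duality G) (C : AddSubgroup (Fin n → G)) :
    AddSubgroup (Fin n → G) where
  carrier := {x | ∀ c ∈ C, ∏ i, M.χ (c i) (x i) = 1}
  zero_mem' := by
    intro c _
    simp [Duality.zero_right]
  add_mem' := by
    intro a b ha hb d hd
    have h : ∏ i, M.χ (d i) ((a + b) i)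
        = (∏ i, M.χ (d i) (a i)) * ∏ i, M.χ (d i) (b i) := by
      rw [← Finset.prod_mul_distrib]
      exact Finset.prod_congr rfl fun i _ => M.add_right (d i) (a i) (b i)
    rw [h, ha d hd, hb d hd, mul_one]
  neg_mem' := by
    intro a ha d hd
    have h : ∏ i, M.χ (d i) ((-a) i) = (∏ i, M.χ (d i) (a i))⁻¹ := by
      rw [← Finset.prod_inv_distrib]
      exact Finset.prod_congr rfl fun i _ => M.neg_right (a i) (d i)
    rw [h, ha d hd, inv_one]

/-- The `M`-dual of a length-one additive code `C ≤ G`. -/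
def dualOne (M : Duality G) (C : AddSubgroup G) : AddSubgroup G where
  carrier := {y | ∀ c ∈ C, M.χ y c = 1}
  zero_mem' := by intro c _; exact M.zero_left c
  add_mem' := by
    intro a b ha hb c hc
    rw [M.add_left a b c, ha c hc, hb c hc, mul_one]
  neg_mem' := by
    intro a ha c hc
    rw [M.neg_left a c, ha c hc, inv_one]

/-- The character `χ` extended coordinatewise to vectors:
`χ_u(v) = ∏ i, χ_{u i}(v i)`. -/
def chiVec {n : ℕ} (M : Duality G) (u v : Fin n → G) : ℂˣ :=
  ∏ i, M.χ (u i) (v i)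

end Duality

section Helpers

variable {G : Type*} [AddCommGroup G]

lemma Duality.nsmul_left (M : Duality G) (x z : G) (n : ℕ) :
    M.χ (n • x) z = M.χ x z ^ n := by
  induction n with
  | zero => simp [M.zero_left]
  | succ k ih => rw [succ_nsmul, M.add_left, ih, pow_succ]

lemma order_p_aux {p : ℕ} (hp : p.Prime) (ω : ℂˣ) (hω1 : ω ≠ 1)
    (hωp : ω ^ p = 1) {k : ℕ} (hk : ω ^ k = 1) (hkp : k < p) : k = 0 := by
  have h1 : orderOf ω ∣ p := orderOf_dvd_of_pow_eq_one hωp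
  have h2 : orderOf ω ≠ 1 := by simpa [orderOf_eq_one_iff] using hω1
  have hop : orderOf ω = p := (hp.eq_one_or_self_of_dvd _ h1).resolve_left h2
  have h3 := orderOf_dvd_of_pow_eq_one hk
  rw [hop] at h3
  exact Nat.eq_zero_of_dvd_of_lt h3 hkp

end Helpers

theorem exists_nontrivial_acd_length_one' (p e : ℕ) (hp : p.Prime) (he : 2 < e)
    {F : Type*} [Field F] [Fintype F] (hcard : Fintype.card F = p ^ e)
    (M : Duality F) :
    ∃ C : AddSubgroup F, C ≠ ⊥ ∧ C ≠ ⊤ ∧ C ⊓ M.dualOne C = ⊥ := by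
  haveI : Fact p.Prime := ⟨hp⟩
  -- characteristic of F is p
  obtain ⟨q, hq⟩ := CharP.exists F
  haveI := hq
  obtain ⟨n, hqprime, hcard'⟩ := FiniteField.card F q
  have hqp : q = p := by
    have hdvd : q ∣ p ^ e := by
      rw [← hcard, hcard']
      exact dvd_pow_self q n.ne_zero
    exact (Nat.prime_dvd_prime_iff_eq hqprime hp).mp (hqprime.dvd_of_dvd_pow hdvd)
  subst hqp
  letI : Algebra (ZMod q) F := ZMod.algebra _ _
  have hsmul : ∀ (a : ZMod q) (x : F), a • x = a.val • x := by
    intro a x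
    rw [← Nat.cast_smul_eq_nsmul (ZMod q) a.val x, ZMod.natCast_val, ZMod.cast_id]
  have hqsmul : ∀ x : F, q • x = 0 := by
    intro x
    rw [nsmul_eq_mul, CharP.cast_eq_zero F q, zero_mul]
  have hpe1 : q < q ^ e := by
    have := Nat.pow_lt_pow_right hp.one_lt (m := 1) (n := e) (by omega)
    simpa using this
  have hpe2 : q ^ 2 < q ^ e := Nat.pow_lt_pow_right hp.one_lt (by omega)
  have chipow : ∀ x z : F, M.χ x z ^ q = 1 := by
    intro x z
    rw [← M.nsmul_left x z q, hqsmul, M.zero_left]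
  by_cases hdiag : ∃ x : F, M.χ x x ≠ 1
  · -- C = span {x}
    obtain ⟨x, hx⟩ := hdiag
    refine ⟨(Submodule.span (ZMod q) {x}).toAddSubgroup, ?_, ?_, ?_⟩
    · intro hbot
      have hxmem : x ∈ (Submodule.span (ZMod q) {x}).toAddSubgroup :=
        Submodule.mem_span_singleton_self x
      rw [hbot, AddSubgroup.mem_bot] at hxmem
      exact hx (by rw [hxmem]; exact M.zero_left 0)
    · intro htop
      have hsurj : Function.Surjective (fun a : ZMod q => a • x) := by
        intro z
        have hz : z ∈ (Submodule.span (ZMod q) {x}).toAddSubgroup := by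
          rw [htop]; trivial
        exact Submodule.mem_span_singleton.mp hz
      have := Fintype.card_le_of_surjective _ hsurj
      rw [hcard, ZMod.card] at this
      omega
    · rw [eq_bot_iff]
      intro z hz
      obtain ⟨hz1, hz2⟩ := AddSubgroup.mem_inf.mp hz
      obtain ⟨a, ha⟩ := Submodule.mem_span_singleton.mp hz1
      have hxmem : x ∈ (Submodule.span (ZMod q) {x}).toAddSubgroup :=
        Submodule.mem_span_singleton_self x
      have h1 : M.χ z x = 1 := hz2 x hxmem
      rw [← ha, hsmul, M.nsmul_left] at h1
      have hav : a.val = 0 :=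
        order_p_aux hp _ hx (chipow x x) h1 (ZMod.val_lt a)
      have ha0 : a = 0 := by
        rwa [← ZMod.val_eq_zero]
      rw [AddSubgroup.mem_bot, ← ha, ha0, zero_smul]
  · push_neg at hdiag
    -- find x y with χ x y ≠ 1
    have hne : ∃ x y : F, M.χ x y ≠ 1 := by
      by_contra hall
      push_neg at hall
      obtain ⟨x₀, _, huniq⟩ := M.bij (fun _ => 1) (by intro y z; simp)
      have hzero : ∀ a : F, a = x₀ := fun a => huniq a (funext fun z => hall a z)
      have h01 : (0 : F) = (1 : F) := (hzero 0).trans (hzero 1).symm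
      have : Fintype.card F = 1 := by
        have : Subsingleton F := by
          constructor; intro a b; rw [hzero a, hzero b]
        exact Fintype.card_eq_one_iff.mpr ⟨x₀, hzero⟩
      rw [hcard] at this
      have := Nat.one_lt_pow (show e ≠ 0 by omega) hp.one_lt
      omega
    obtain ⟨x, y, hxy⟩ := hne
    have hskew : ∀ u v : F, M.χ u v * M.χ v u = 1 := by
      intro u v
      have h := hdiag (u + v)
      rw [M.add_left, M.add_right, M.add_right, hdiag u, hdiag v, one_mul, mul_one] at h
      exact h
    have hyx : M.χ y x = (M.χ x y)⁻¹ := by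
      have := hskew x y
      exact eq_inv_of_mul_eq_one_left (by rw [mul_comm]; exact this)
    refine ⟨(Submodule.span (ZMod q) {x, y}).toAddSubgroup, ?_, ?_, ?_⟩
    · intro hbot
      have hxmem : x ∈ (Submodule.span (ZMod q) ({x, y} : Set F)).toAddSubgroup :=
        Submodule.subset_span (Set.mem_insert x {y})
      rw [hbot, AddSubgroup.mem_bot] at hxmem
      exact hxy (by rw [hxmem]; exact M.zero_left y)
    · intro htop
      have hsurj : Function.Surjective (fun ab : ZMod q × ZMod q => ab.1 • x + ab.2 • y) := by
        intro z
        have hz : z ∈ (Submodule.span (ZMod q) ({x, y} : Set F)).toAddSubgroup := by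
          rw [htop]; trivial
        obtain ⟨a, b, hab⟩ := Submodule.mem_span_pair.mp hz
        exact ⟨⟨a, b⟩, hab⟩
      have := Fintype.card_le_of_surjective _ hsurj
      rw [hcard, Fintype.card_prod, ZMod.card] at this
      have : q ^ e ≤ q ^ 2 := by rw [pow_two]; exact this
      omega
    · rw [eq_bot_iff]
      intro z hz
      obtain ⟨hz1, hz2⟩ := AddSubgroup.mem_inf.mp hz
      obtain ⟨a, b, hab⟩ := Submodule.mem_span_pair.mp hz1
      have hxmem : x ∈ (Submodule.span (ZMod q) ({x, y} : Set F)).toAddSubgroup :=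
        Submodule.subset_span (Set.mem_insert x {y})
      have hymem : y ∈ (Submodule.span (ZMod q) ({x, y} : Set F)).toAddSubgroup :=
        Submodule.subset_span (Set.mem_insert_of_mem x rfl)
      have h1 : M.χ z y = 1 := hz2 y hymem
      have h2 : M.χ z x = 1 := hz2 x hxmem
      rw [← hab, M.add_left, hsmul, hsmul, M.nsmul_left, M.nsmul_left,
        hdiag y, one_pow, mul_one] at h1
      rw [← hab, M.add_left, hsmul, hsmul, M.nsmul_left, M.nsmul_left,
        hdiag x, one_pow, one_mul, hyx, inv_pow, inv_eq_one] at h2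
      have ha0 : a = 0 := by
        rw [← ZMod.val_eq_zero]
        exact order_p_aux hp _ hxy (chipow x y) h1 (ZMod.val_lt a)
      have hb0 : b = 0 := by
        rw [← ZMod.val_eq_zero]
        exact order_p_aux hp _ hxy (chipow x y) h2 (ZMod.val_lt b)
      rw [AddSubgroup.mem_bot, ← hab, ha0, hb0, zero_smul, zero_smul, add_zero]

/-- For any prime `p`, `e > 2`, and any duality `M` on `(F_{p^e}, +)`,
there exists a nontrivial ACD code of length one. -/
theorem exists_nontrivial_acd_length_one (p e : ℕ) (hp : p.Prime) (he : 2 < e)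
    {F : Type*} [Field F] [Fintype F] (hcard : Fintype.card F = p ^ e)
    (M : Duality F) :
    ∃ C : AddSubgroup F, C ≠ ⊥ ∧ C ≠ ⊤ ∧ C ⊓ M.dualOne C = ⊥ :=
  exists_nontrivial_acd_length_one' p e hp he hcard M
end

section
/- Let M be a duality on (F_{p^{2e}}, +) with χ_x(x) = 1 for all x (a skew-symmetric duality). If C ≤ F_{p^{2e}}^n is an ACD code (C ∩ C^M = {0}) generated over F_p by m F_p-linearly independent rows of a generator matrix, then m is even. -/
section AltDet

open MvPolynomial in
/-- An alternating (skew-symmetric with zero diagonal) matrix of odd order over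
any commutative ring has determinant zero. -/
lemma det_alt_odd {R : Type*} [CommRing R] {m : ℕ} (hm : Odd m)
    (K : Matrix (Fin m) (Fin m) R) (hKskew : ∀ i j, K j i = -K i j)
    (hKdiag : ∀ i, K i i = 0) : K.det = 0 := by
  classical
  set S := MvPolynomial (Fin m × Fin m) ℤ with hS
  set J : Matrix (Fin m) (Fin m) S := fun i j =>
    if i < j then X (i, j) else if j < i then -X (j, i) else 0 with hJ
  have hJt : J.transpose = -J := by
    ext i j : 1
    simp only [Matrix.transpose_apply, Matrix.neg_apply]
    simp only [hJ]
    rcases lt_trichotomy i j with h | h | h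
    · rw [if_neg (asymm h), if_pos h, if_pos h]
    · subst h; simp
    · rw [if_pos h, if_neg (asymm h), if_pos h, neg_neg]
  have hdetJ : J.det = 0 := by
    have h1 : J.det = -J.det := by
      conv_lhs => rw [← Matrix.det_transpose, hJt, Matrix.det_neg]
      rw [Fintype.card_fin, hm.neg_one_pow, neg_one_mul]
    have h2 : (2 : S) * J.det = 0 := by linear_combination h1
    haveI : CharZero S := inferInstance
    have h2' : (2 : S) ≠ 0 := two_ne_zero
    rcases mul_eq_zero.mp h2 with h | h
    · exact absurd h h2'
    · exact h
  let φ : S →+* R := eval₂Hom (Int.castRingHom R) (fun q => K q.1 q.2)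
  have hmap : J.map φ = K := by
    ext i j
    simp only [Matrix.map_apply]
    simp only [hJ]
    rcases lt_trichotomy i j with h | h | h
    · rw [if_pos h]; exact eval₂Hom_X' _ _ _
    · subst h; simp [hKdiag i]
    · rw [if_neg (asymm h), if_pos h, map_neg]
      rw [show φ (X (j, i)) = K j i from eval₂Hom_X' _ _ _, hKskew i j, neg_neg]
  calc K.det = (J.map φ).det := by rw [hmap]
    _ = φ J.det := (RingHom.map_det φ J).symm
    _ = 0 := by rw [hdetJ, map_zero]

end AltDet

/-- Over a skew-symmetric duality on `(F_{p^{2e}}, +)`, an ACD code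
generated by `m` linearly independent rows over `F_p` has `m` even. -/
theorem acd_skewSymmetric_even_generators (p e m n : ℕ) (hp : p.Prime)
    {F : Type*} [Field F] [Fintype F] (hcard : Fintype.card F = p ^ (2 * e))
    (M : Duality F) (hskew : ∀ x : F, M.χ x x = 1)
    (rows : Fin m → (Fin n → F))
    (hli : ∀ c : Fin m → ZMod p, (∑ i, (c i).val • rows i) = 0 → c = 0)
    (hACD : AddSubgroup.closure (Set.range rows) ⊓
        M.dualCode (AddSubgroup.closure (Set.range rows)) = ⊥) :
    Even m := by
    classical
  by_contra hodd
  rw [← Nat.not_odd_iff_even, not_not] at hodd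
  haveI : NeZero p := ⟨hp.ne_zero⟩
  haveI : Fact p.Prime := ⟨hp⟩
  -- characteristic of F is p
  have he : e ≠ 0 := by
    rintro rfl
    have h1 := Fintype.one_lt_card (α := F)
    rw [hcard] at h1
    simp at h1
  have hchar : CharP F p := by
    obtain ⟨q, hq⟩ := CharP.exists F
    haveI := hq
    obtain ⟨nn, hqp, hcard'⟩ := FiniteField.card F q
    have hpq : p = q := by
      have h1 : p ∣ q ^ (nn : ℕ) := by
        rw [← hcard', hcard]
        exact dvd_pow_self p (by omega)
      exact (Nat.prime_dvd_prime_iff_eq hp hqp).mp (hp.dvd_of_dvd_pow h1)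
    subst hpq; exact hq
  haveI := hchar
  have hsmul : ∀ x : F, p • x = 0 := fun x => by
    rw [nsmul_eq_mul, CharP.cast_eq_zero F p, zero_mul]
  -- basic character identities
  have chi_nsmul : ∀ (a : ℕ) (x y : F), M.χ (a • x) y = (M.χ x y) ^ a := by
    intro a x y
    induction a with
    | zero => rw [zero_smul, pow_zero]; exact M.zero_left y
    | succ a ih => rw [succ_nsmul, M.add_left, ih, pow_succ]
  have chi_skew2 : ∀ x y : F, M.χ x y * M.χ y x = 1 := by
    intro x y
    have h := hskew (x + y)
    rw [M.add_left, M.add_right, M.add_right, hskew x, hskew y, one_mul, mul_one] at h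
    exact h
  -- the vector pairing
  set P : (Fin n → F) → (Fin n → F) → ℂˣ := fun u w => ∏ j', M.χ (u j') (w j') with hP
  have hPp : ∀ u w, P u w ^ p = 1 := by
    intro u w
    rw [hP]
    rw [← Finset.prod_pow]
    apply Finset.prod_eq_one
    intro j' _
    rw [← chi_nsmul, hsmul, M.zero_left]
  have hPskew : ∀ u w, P u w * P w u = 1 := by
    intro u w
    rw [hP, ← Finset.prod_mul_distrib]
    exact Finset.prod_eq_one fun j' _ => chi_skew2 _ _
  have hPdiag : ∀ u, P u u = 1 := fun u => Finset.prod_eq_one fun j' _ => hskew _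
  -- discrete logarithms
  set ζ : ℂ := Complex.exp (2 * Real.pi * Complex.I / p) with hζdef
  have hζ : IsPrimitiveRoot ζ p := Complex.isPrimitiveRoot_exp p hp.ne_zero
  have hlog : ∀ i j : Fin m, ∃ a : ℕ, ζ ^ a = (P (rows i) (rows j) : ℂ) := by
    intro i j
    obtain ⟨a, _, ha⟩ := hζ.eq_pow_of_pow_eq_one (ξ := (P (rows i) (rows j) : ℂ))
      (by rw [← Units.val_pow_eq_pow_val, hPp, Units.val_one])
    exact ⟨a, ha⟩
  choose k hk using hlog
  set K : Matrix (Fin m) (Fin m) (ZMod p) := fun i j => ((k i j : ℕ) : ZMod p) with hK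
  have hdvd_iff : ∀ a : ℕ, ζ ^ a = 1 → ((a : ZMod p) = 0) := fun a h =>
    (ZMod.natCast_eq_zero_iff a p).mpr ((hζ.pow_eq_one_iff_dvd a).mp h)
  have hKskew : ∀ i j, K j i = -K i j := by
    intro i j
    have h : ζ ^ (k i j + k j i) = 1 := by
      rw [pow_add, hk, hk, ← Units.val_mul, hPskew, Units.val_one]
    have h0 := hdvd_iff _ h
    push_cast at h0
    have h0' : K j i + K i j = 0 := by rw [add_comm]; exact h0
    exact eq_neg_of_add_eq_zero_left h0'
  have hKdiag : ∀ i, K i i = 0 := fun i =>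
    hdvd_iff _ (by rw [hk, hPdiag, Units.val_one])
  -- kernel vector
  have hdet : K.det = 0 := det_alt_odd hodd K hKskew hKdiag
  obtain ⟨v, hv0, hvK⟩ := Matrix.exists_vecMul_eq_zero_iff.mpr hdet
  set x : Fin n → F := ∑ i, (v i).val • rows i with hxdef
  have hx0 : x ≠ 0 := fun h => hv0 (hli v h)
  have hxC : x ∈ AddSubgroup.closure (Set.range rows) := by
    apply AddSubgroup.sum_mem
    intro i _
    exact AddSubgroup.nsmul_mem _ (AddSubgroup.subset_closure (Set.mem_range_self i)) _
  have chi_sum_left : ∀ (s : Finset (Fin m)) (f : Fin m → F) (y : F),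
      M.χ (∑ i ∈ s, f i) y = ∏ i ∈ s, M.χ (f i) y := by
    intro s f y
    induction s using Finset.cons_induction with
    | empty => rw [Finset.sum_empty, Finset.prod_empty]; exact M.zero_left y
    | cons a s ha ih => rw [Finset.sum_cons, M.add_left, ih, Finset.prod_cons]
  have hgen : ∀ j : Fin m, ∏ j', M.χ (x j') (rows j j') = 1 := by
    intro j
    have hx' : ∀ j', x j' = ∑ i, (v i).val • rows i j' := by
      intro j'
      rw [hxdef, Finset.sum_apply]
      exact Finset.sum_congr rfl fun i _ => rfl
    have step1 : ∏ j', M.χ (x j') (rows j j')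
        = ∏ i, (P (rows i) (rows j)) ^ (v i).val := by
      calc ∏ j', M.χ (x j') (rows j j')
          = ∏ j', ∏ i, M.χ ((v i).val • rows i j') (rows j j') := by
            refine Finset.prod_congr rfl fun j' _ => ?_
            rw [hx' j', chi_sum_left]
        _ = ∏ i, ∏ j', M.χ ((v i).val • rows i j') (rows j j') := Finset.prod_comm
        _ = ∏ i, (P (rows i) (rows j)) ^ (v i).val := by
            refine Finset.prod_congr rfl fun i _ => ?_
            rw [hP, ← Finset.prod_pow]
            exact Finset.prod_congr rfl fun j' _ => chi_nsmul _ _ _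
    have hsum0 : ((∑ i, k i j * (v i).val : ℕ) : ZMod p) = 0 := by
      push_cast
      have hval : ∀ i : Fin m, (((v i).val : ℕ) : ZMod p) = v i := fun i =>
        ZMod.natCast_rightInverse (v i)
      have hvK' : ∑ i, v i * K i j = 0 := by
        have := congrFun hvK j
        simpa [Matrix.vecMul, dotProduct] using this
      calc ∑ i, ((k i j : ℕ) : ZMod p) * (((v i).val : ℕ) : ZMod p)
          = ∑ i, v i * K i j := by
            refine Finset.sum_congr rfl fun i _ => ?_
            rw [hval i, mul_comm]
        _ = 0 := hvK'
    have hz : ζ ^ (∑ i, k i j * (v i).val) = 1 := by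
      rw [hζ.pow_eq_one_iff_dvd]
      exact (ZMod.natCast_eq_zero_iff _ _).mp hsum0
    apply Units.ext
    rw [step1, Units.val_one]
    calc ((∏ i, (P (rows i) (rows j)) ^ (v i).val : ℂˣ) : ℂ)
        = ∏ i, ((P (rows i) (rows j) : ℂ)) ^ (v i).val := by
          refine (map_prod (Units.coeHom ℂ) _ _).trans ?_
          exact Finset.prod_congr rfl fun i _ => Units.val_pow_eq_pow_val _ _
      _ = ∏ i, ζ ^ (k i j * (v i).val) := by
          refine Finset.prod_congr rfl fun i _ => ?_
          rw [← hk i j, ← pow_mul]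
      _ = ζ ^ (∑ i, k i j * (v i).val) := by
          rw [← Finset.prod_pow_eq_pow_sum]
      _ = 1 := hz
  have hxdual : x ∈ M.dualCode (AddSubgroup.closure (Set.range rows)) := by
    intro c hc
    induction hc using AddSubgroup.closure_induction with
    | mem g hg => obtain ⟨j, rfl⟩ := hg; exact hgen j
    | zero =>
        apply Finset.prod_eq_one
        intro j' _
        rw [Pi.zero_apply, M.zero_right]
    | add a b ha hb iha ihb =>
        have hsplit : ∏ j', M.χ (x j') ((a + b) j')
            = (∏ j', M.χ (x j') (a j')) * ∏ j', M.χ (x j') (b j') := by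
          rw [← Finset.prod_mul_distrib]
          exact Finset.prod_congr rfl fun j' _ => M.add_right _ _ _
        rw [hsplit, iha, ihb, mul_one]
    | neg a ha iha =>
        have hsplit : ∏ j', M.χ (x j') ((-a) j')
            = (∏ j', M.χ (x j') (a j'))⁻¹ := by
          rw [← Finset.prod_inv_distrib]
          exact Finset.prod_congr rfl fun j' _ => M.neg_right _ _
        rw [hsplit, iha, inv_one]
  have hmem : x ∈ AddSubgroup.closure (Set.range rows) ⊓
      M.dualCode (AddSubgroup.closure (Set.range rows)) :=
    AddSubgroup.mem_inf.mpr ⟨hxC, hxdual⟩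
  rw [hACD, AddSubgroup.mem_bot] at hmem
  exact hx0 hmem
end
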